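/- Let C ⊆ ℝ² be a strict closed convex cone with nonempty interior and let g ∈ GL(2,ℤ) preserve C. If there exists a nonzero vector v with integer coordinates lying on the frontier of C with v ∈ C, then g² is the identity matrix. -/

import Mathlib

open Pointwise

set_option maxHeartbeats 1000000

lemma aux_parallel (x y : Fin 2 → ℝ) (hx : x ≠ 0) (h : x 0 * y 1 - x 1 * y 0 = 0) :
    ∃ t : ℝ, y = t • x := by
  have hx' : x 0 ≠ 0 ∨ x 1 ≠ 0 := by
    by_contra hc
    push_neg at hc
    exact hx (by funext i; fin_cases i <;> simp [hc.1, hc.2])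
  rcases hx' with h0 | h1
  · refine ⟨y 0 / x 0, ?_⟩
    funext i; fin_cases i <;> simp [Pi.smul_apply] <;> field_simp <;> nlinarith [h]
  · refine ⟨y 1 / x 1, ?_⟩
    funext i; fin_cases i <;> simp [Pi.smul_apply] <;> field_simp <;> nlinarith [h]

lemma aux_rat_root (n : ℤ) (r : ℚ) (hr : 0 < r) (h : r ^ 2 - n * r + 1 = 0) : r = 1 := by
  have hden : (r.den : ℚ) ≠ 0 := by exact_mod_cast r.den_nz
  have hnum : (r.num : ℚ) = r * r.den := (div_eq_iff hden).mp (Rat.num_div_den r)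
  have key : (r.num : ℚ) ^ 2 - n * r.num * r.den + (r.den : ℚ) ^ 2 = 0 := by
    rw [hnum]; linear_combination (r.den : ℚ) ^ 2 * h
  have keyZ : r.num ^ 2 - n * r.num * r.den + (r.den : ℤ) ^ 2 = 0 := by exact_mod_cast key
  have hcop : IsCoprime (r.num) (r.den : ℤ) := by
    rw [Int.isCoprime_iff_gcd_eq_one]
    exact_mod_cast r.reduced
  have hdvd : (r.den : ℤ) ∣ r.num ^ 2 := ⟨n * r.num - r.den, by linarith [keyZ]⟩
  have hcop2 : IsCoprime (r.num ^ 2) ((r.den : ℤ)) := IsCoprime.pow_left hcop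
  have hunit : IsUnit (r.den : ℤ) := hcop2.isUnit_of_dvd' hdvd dvd_rfl
  have hden1 : r.den = 1 := by
    have := Int.isUnit_iff.mp hunit
    omega
  have hrnum : r = (r.num : ℚ) := by rw [← Rat.num_div_den r, hden1]; simp
  have hnposq : 0 < r.num := Rat.num_pos.mpr hr
  have keyN : r.num ^ 2 - n * r.num + 1 = 0 := by
    have := keyZ; rw [hden1] at this; push_cast at this; linarith
  have hdvd1 : r.num ∣ 1 := ⟨n - r.num, by rw [mul_sub]; nlinarith [keyN]⟩
  have : r.num = 1 := Int.eq_one_of_dvd_one (le_of_lt hnposq) hdvd1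
  rw [hrnum, this]; norm_num

lemma aux_cont (N : Matrix (Fin 2) (Fin 2) ℝ) : Continuous fun v : Fin 2 → ℝ => N.mulVec v :=
  (Matrix.mulVecLin N).continuous_of_finiteDimensional

lemma aux_decomp (p q : Fin 2 → ℝ) (hD : p 0 * q 1 - p 1 * q 0 ≠ 0) (x : Fin 2 → ℝ) :
    x = ((x 0 * q 1 - x 1 * q 0) / (p 0 * q 1 - p 1 * q 0)) • p
      + ((p 0 * x 1 - p 1 * x 0) / (p 0 * q 1 - p 1 * q 0)) • q := by
  funext i; fin_cases i <;> (simp only [Fin.zero_eta, Fin.mk_one, Fin.isValue, Pi.add_apply, Pi.smul_apply, smul_eq_mul]; rw [div_mul_eq_mul_div, div_mul_eq_mul_div, ← add_div, eq_div_iff hD]; ring)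

lemma aux_fix (p q : Fin 2 → ℝ) (hD : p 0 * q 1 - p 1 * q 0 ≠ 0) (N : Matrix (Fin 2) (Fin 2) ℝ)
    (hp : N.mulVec p = p) (hq : N.mulVec q = q) : N = 1 := by
  have hall : ∀ x, N.mulVec x = x := by
    intro x
    have hd := aux_decomp p q hD x
    rw [hd, Matrix.mulVec_add, Matrix.mulVec_smul, Matrix.mulVec_smul, hp, hq]
  ext i j
  have h := congrFun (hall (Pi.single j 1)) i
  rw [Matrix.mulVec_single] at h
  simp only [MulOpposite.op_one, one_smul, Matrix.col_apply] at h
  rw [h, Matrix.one_apply, Pi.single_apply]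

theorem sq_eq_one_of_rational_boundary_ray (C : Set (Fin 2 → ℝ))
    (hclosed : IsClosed C) (hconv : Convex ℝ C)
    (hcone : ∀ v ∈ C, ∀ t : ℝ, 0 ≤ t → t • v ∈ C)
    (hstrict : ∀ v : Fin 2 → ℝ, v ∈ C → -v ∈ C → v = 0)
    (hint : (interior C).Nonempty)
    (g : Matrix (Fin 2) (Fin 2) ℤ) (hg : g.det = 1 ∨ g.det = -1)
    (hpres : (fun v : Fin 2 → ℝ => (g.map (Int.cast : ℤ → ℝ)).mulVec v) '' C = C)
    (w : Fin 2 → ℤ) (hw : w ≠ 0)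
    (hwC : (fun i => (w i : ℝ)) ∈ C)
    (hwfr : (fun i => (w i : ℝ)) ∈ frontier C) :
    g ^ 2 = 1 := by
  set w' : Fin 2 → ℝ := fun i => (w i : ℝ) with hw'def
  have hw'0 : w' ≠ 0 := by
    intro h
    apply hw
    funext i
    have := congrFun h i
    simpa [hw'def] using this
  have h0C : (0 : Fin 2 → ℝ) ∈ C := by simpa using hcone _ hwC 0 le_rfl
  have hadd : ∀ x ∈ C, ∀ y ∈ C, x + y ∈ C := by
    intro x hx y hy
    have h2 : ((1:ℝ)/2) • x + ((1:ℝ)/2) • y ∈ C :=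
      hconv hx hy (by norm_num) (by norm_num) (by norm_num)
    have := hcone _ h2 2 (by norm_num)
    rw [smul_add, smul_smul, smul_smul] at this
    norm_num at this
    exact this
  obtain ⟨u, hu⟩ := hint
  have huC : u ∈ C := interior_subset hu
  have hfr_eq : frontier C = C \ interior C := hclosed.frontier_eq
  have hwni : w' ∉ interior C := by
    rw [hfr_eq] at hwfr; exact hwfr.2
  -- supporting functional
  obtain ⟨f, hf⟩ := geometric_hahn_banach_open_point hconv.interior isOpen_interior hwni
  have hCsub : ∀ x ∈ C, x ∈ closure (interior C) := by
    intro x hx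
    have htend : Filter.Tendsto (fun n : ℕ => x + (1/(n+1) : ℝ) • (u - x))
        Filter.atTop (nhds x) := by
      have h1 : Filter.Tendsto (fun n : ℕ => (1/(n+1) : ℝ)) Filter.atTop (nhds 0) :=
        tendsto_one_div_add_atTop_nhds_zero_nat
      have := (h1.smul_const (u - x)).const_add x
      simpa using this
    apply mem_closure_of_tendsto htend
    filter_upwards with n
    have hn : (0:ℝ) < 1/(n+1) := by positivity
    have hn1 : (1/(n+1):ℝ) ≤ 1 := by
      rw [div_le_one (by positivity)]
      linarith [Nat.cast_nonneg (α := ℝ) n]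
    have hcombo := hconv.combo_closure_interior_mem_interior (subset_closure hx) hu
        (by linarith : (0:ℝ) ≤ 1 - 1/(n+1)) hn (by ring)
    have heq : (1 - 1/(n+1):ℝ) • x + (1/(n+1):ℝ) • u = x + (1/(n+1) : ℝ) • (u - x) := by
      funext i
      simp only [Pi.add_apply, Pi.smul_apply, Pi.sub_apply, smul_eq_mul]
      ring
    rwa [heq] at hcombo
  have hfle : ∀ x ∈ C, f x ≤ f w' := by
    intro x hx
    have hsub : closure (interior C) ⊆ {y | f y ≤ f w'} :=
      closure_minimal (fun y hy => (hf y hy).le) (isClosed_le f.continuous continuous_const)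
    exact hsub (hCsub x hx)
  have hfw0 : f w' = 0 := by
    have h2 : f ((2:ℝ) • w') ≤ f w' := hfle _ (hcone _ hwC 2 (by norm_num))
    have h0 : f 0 ≤ f w' := hfle _ h0C
    rw [map_smul, smul_eq_mul] at h2
    rw [map_zero] at h0
    linarith
  have hfC : ∀ x ∈ C, f x ≤ 0 := fun x hx => hfw0 ▸ hfle x hx
  have hfu : f u < 0 := hfw0 ▸ hf u hu
  -- the set K
  set K : Set ℝ := {t : ℝ | u + t • w' ∈ C} with hKdef
  have hK0 : ∀ t : ℝ, 0 ≤ t → t ∈ K := fun t ht => hadd _ huC _ (hcone _ hwC t ht)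
  have hKcl : IsClosed K := by
    have hc : Continuous fun t : ℝ => u + t • w' := by continuity
    exact IsClosed.preimage hc hclosed
  have hKbdd : BddBelow K := by
    by_contra hnb
    rw [not_bddBelow_iff] at hnb
    choose t ht htlt using fun n : ℕ => hnb (-(n+1) : ℝ)
    have htneg : ∀ n : ℕ, t n < 0 := by
      intro n
      have h1 : (0:ℝ) < (n:ℝ) + 1 := by positivity
      linarith [htlt n]
    have hmem : ∀ n : ℕ, (-1 / t n) • u + (-1 : ℝ) • w' ∈ C := by
      intro n
      have hpos : (0:ℝ) ≤ -1 / t n :=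
        le_of_lt (div_pos_of_neg_of_neg (by norm_num) (htneg n))
      have hmem0 := hcone _ (ht n) (-1 / t n) hpos
      have heq : (-1 / t n) • (u + t n • w') = (-1 / t n) • u + (-1 : ℝ) • w' := by
        funext i
        simp only [Pi.add_apply, Pi.smul_apply, smul_eq_mul]
        have : t n ≠ 0 := ne_of_lt (htneg n)
        field_simp
        ring
      rwa [heq] at hmem0
    have htd : Filter.Tendsto (fun n : ℕ => (-1 / t n : ℝ)) Filter.atTop (nhds 0) := by
      apply tendsto_of_tendsto_of_tendsto_of_le_of_le (g := fun _ : ℕ => (0:ℝ))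
        (h := fun n : ℕ => (1/(n+1) : ℝ)) tendsto_const_nhds
        tendsto_one_div_add_atTop_nhds_zero_nat
      · intro n
        show (0:ℝ) ≤ -1 / t n
        exact le_of_lt (div_pos_of_neg_of_neg (by norm_num) (htneg n))
      · intro n
        show -1 / t n ≤ 1 / ((n:ℝ) + 1)
        have h1 : (0:ℝ) < (n:ℝ) + 1 := by positivity
        have h2 : (n:ℝ) + 1 ≤ -t n := by linarith [htlt n]
        have : -1 / t n = 1 / (-t n) := by
          rw [div_eq_div_iff (ne_of_lt (htneg n)) (by linarith)]
          ring
        rw [this]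
        exact one_div_le_one_div_of_le h1 h2
    have hlim : Filter.Tendsto (fun n : ℕ => (-1 / t n) • u + (-1 : ℝ) • w')
        Filter.atTop (nhds ((0:ℝ) • u + (-1 : ℝ) • w')) :=
      (htd.smul_const u).add_const ((-1 : ℝ) • w')
    have hnegw : -w' ∈ C := by
      have := hclosed.mem_of_tendsto hlim (Filter.Eventually.of_forall hmem)
      simpa using this
    exact hw'0 (hstrict w' hwC hnegw)
  set m := sInf K with hmdef
  have hmK : m ∈ K := hKcl.csInf_mem ⟨0, hK0 0 le_rfl⟩ hKbdd
  have hmlb : ∀ t ∈ K, m ≤ t := fun t ht => csInf_le hKbdd ht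
  have hmneg : m < 0 := by
    obtain ⟨ε, hε, hball⟩ := Metric.isOpen_iff.mp isOpen_interior u hu
    set δ := ε / (2 * (‖w'‖ + 1)) with hδdef
    have hδ : 0 < δ := by positivity
    have hdist : dist (u + (-δ) • w') u < ε := by
      rw [dist_eq_norm, add_sub_cancel_left, norm_smul]
      have h1 : ‖(-δ : ℝ)‖ = δ := by rw [Real.norm_eq_abs, abs_neg, abs_of_pos hδ]
      rw [h1, hδdef]
      have h2 : (0:ℝ) < ‖w'‖ + 1 := by positivity
      rw [div_mul_eq_mul_div, div_lt_iff₀ (by positivity)]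
      nlinarith [norm_nonneg w']
    have hmem' : u + (-δ) • w' ∈ C := interior_subset (hball hdist)
    have hmem : -δ ∈ K := by show u + (-δ) • w' ∈ C; exact hmem'
    have := hmlb _ hmem
    linarith
  set v : Fin 2 → ℝ := u + m • w' with hvdef
  have hvC : v ∈ C := hmK
  have hvni : v ∉ interior C := by
    intro hvin
    obtain ⟨ε, hε, hball⟩ := Metric.isOpen_iff.mp isOpen_interior v hvin
    set δ := ε / (2 * (‖w'‖ + 1)) with hδdef
    have hδ : 0 < δ := by positivity
    have hdist : dist (v + (-δ) • w') v < ε := by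
      rw [dist_eq_norm, add_sub_cancel_left, norm_smul]
      have h1 : ‖(-δ : ℝ)‖ = δ := by rw [Real.norm_eq_abs, abs_neg, abs_of_pos hδ]
      rw [h1, hδdef]
      rw [div_mul_eq_mul_div, div_lt_iff₀ (by positivity)]
      nlinarith [norm_nonneg w']
    have hmem' : v + (-δ) • w' ∈ C := interior_subset (hball hdist)
    have heq : v + (-δ) • w' = u + (m + -δ) • w' := by
      rw [hvdef, add_smul, add_assoc]
    have hmem2 : m + -δ ∈ K := by
      show u + (m + -δ) • w' ∈ C
      rw [← heq]; exact hmem'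
    have := hmlb _ hmem2
    linarith
  have hvfr : v ∈ frontier C := by rw [hfr_eq]; exact ⟨hvC, hvni⟩
  have hfv : f v < 0 := by
    have : f v = f u + m * f w' := by rw [hvdef, map_add, map_smul, smul_eq_mul]
    rw [this, hfw0, mul_zero, add_zero]
    exact hfu
  have hv0 : v ≠ 0 := by
    intro h
    rw [h, map_zero] at hfv
    exact lt_irrefl 0 hfv
  have hnotpar : ∀ t : ℝ, v ≠ t • w' := by
    intro t ht
    have : f v = t * f w' := by rw [ht, map_smul, smul_eq_mul]
    rw [hfw0, mul_zero] at this
    exact absurd this (ne_of_lt hfv)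
  set D := w' 0 * v 1 - w' 1 * v 0 with hDdef
  have hD : D ≠ 0 := by
    intro h
    obtain ⟨t, htp⟩ := aux_parallel w' v hw'0 h
    exact hnotpar t htp
  -- coordinates of points of C are nonnegative
  have hCco : ∀ x ∈ C, 0 ≤ (x 0 * v 1 - x 1 * v 0) / D ∧ 0 ≤ (w' 0 * x 1 - w' 1 * x 0) / D := by
    intro x hx
    set a := (x 0 * v 1 - x 1 * v 0) / D with hadef
    set b := (w' 0 * x 1 - w' 1 * x 0) / D with hbdef
    have hxd : x = a • w' + b • v := aux_decomp w' v hD x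
    have hfx : f x = b * f v := by
      rw [hxd, map_add, map_smul, map_smul, smul_eq_mul, smul_eq_mul, hfw0, mul_zero, zero_add]
    have hb : 0 ≤ b := by nlinarith [hfC x hx, hfv]
    refine ⟨?_, hb⟩
    rcases eq_or_lt_of_le hb with hb0 | hbpos
    · by_contra han
      push_neg at han
      have hxa : x = a • w' := by rw [hxd, ← hb0, zero_smul, add_zero]
      have ha0 : a ≠ 0 := ne_of_lt han
      have hnw : -w' ∈ C := by
        have hsc := hcone x hx (-1/a) (le_of_lt (div_pos_of_neg_of_neg (by norm_num) han))
        rw [hxa, smul_smul] at hsc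
        have : (-1/a) * a = -1 := by field_simp
        rw [this, neg_one_smul] at hsc
        exact hsc
      exact hw'0 (hstrict w' hwC hnw)
    · have hscale : (1/b) • x ∈ C := hcone x hx (1/b) (by positivity)
      have heq : (1/b) • x = u + (m + a/b) • w' := by
        rw [hxd]
        funext i
        have hvi : v i = u i + m * w' i := by rw [hvdef]; simp
        simp only [Pi.add_apply, Pi.smul_apply, smul_eq_mul, hvi]
        field_simp
        ring
      have hKm : m + a/b ∈ K := by
        show u + (m + a/b) • w' ∈ C
        rw [← heq]; exact hscale
      have hge := hmlb _ hKm
      have hab : 0 ≤ a/b := by linarith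
      have : a = (a/b) * b := by field_simp
      nlinarith
  have hmemC : ∀ a b : ℝ, 0 ≤ a → 0 ≤ b → a • w' + b • v ∈ C :=
    fun a b ha hb => hadd _ (hcone _ hwC a ha) _ (hcone _ hvC b hb)
  have hintadd : ∀ x ∈ interior C, ∀ y ∈ C, x + y ∈ interior C := by
    intro x hx y hy
    rw [mem_interior]
    refine ⟨(fun z => z + y) '' interior C, ?_, ?_, ⟨x, hx, rfl⟩⟩
    · rintro _ ⟨z, hz, rfl⟩
      exact hadd _ (interior_subset hz) _ hy
    · exact (Homeomorph.addRight y).isOpenMap _ isOpen_interior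
  have hsmulint : ∀ t : ℝ, 0 < t → ∀ x ∈ interior C, t • x ∈ interior C := by
    intro t ht x hx
    have hCt : t • C = C := by
      apply Set.Subset.antisymm
      · rintro _ ⟨z, hz, rfl⟩
        exact hcone z hz t ht.le
      · intro z hz
        refine ⟨t⁻¹ • z, hcone z hz t⁻¹ (by positivity), ?_⟩
        show t • t⁻¹ • z = z
        rw [smul_smul]
        have htt : t * t⁻¹ = 1 := by field_simp
        rw [htt, one_smul]

    have hi := interior_smul₀ (ne_of_gt ht) C
    rw [hCt] at hi
    rw [hi]
    exact Set.smul_mem_smul_set hx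
  have hposint : ∀ a b : ℝ, 0 < a → 0 < b → a • w' + b • v ∈ interior C := by
    intro a b ha hb
    set t := min (a / (-m)) b with htdef
    have hmpos : 0 < -m := by linarith
    have ht : 0 < t := lt_min (by positivity) hb
    have h1 : t • u ∈ interior C := hsmulint t ht u hu
    have hta : t * (-m) ≤ a := by
      have := min_le_left (a / (-m)) b
      calc t * (-m) ≤ (a / (-m)) * (-m) := by nlinarith
      _ = a := div_mul_cancel₀ a (ne_of_gt hmpos)
    have htb : t ≤ b := min_le_right _ _
    have h2 : (a - t * (-m)) • w' + (b - t) • v ∈ C := hmemC _ _ (by linarith) (by linarith)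
    have heq : a • w' + b • v = t • u + ((a - t * (-m)) • w' + (b - t) • v) := by
      funext i
      have hui : u i = v i - m * w' i := by rw [hvdef]; simp
      simp only [Pi.add_apply, Pi.smul_apply, smul_eq_mul, hui]
      ring
    rw [heq]
    exact hintadd _ h1 _ h2
  -- structure of the frontier
  have hstruct : ∀ x, x ∈ frontier C → x ≠ 0 →
      (∃ a : ℝ, 0 < a ∧ x = a • w') ∨ (∃ b : ℝ, 0 < b ∧ x = b • v) := by
    intro x hxfr hx0
    rw [hfr_eq] at hxfr
    obtain ⟨hxC, hxni⟩ := hxfr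
    set a := (x 0 * v 1 - x 1 * v 0) / D with hadef
    set b := (w' 0 * x 1 - w' 1 * x 0) / D with hbdef
    have hab := hCco x hxC
    rw [← hadef, ← hbdef] at hab
    obtain ⟨ha, hb⟩ := hab
    have hxd : x = a • w' + b • v := aux_decomp w' v hD x
    have hnotboth : ¬(0 < a ∧ 0 < b) := by
      rintro ⟨ha', hb'⟩
      exact hxni (hxd ▸ hposint a b ha' hb')
    rcases eq_or_lt_of_le hb with hb0 | hbpos
    · rcases eq_or_lt_of_le ha with ha0 | hapos
      · exfalso
        apply hx0
        rw [hxd, ← ha0, ← hb0, zero_smul, zero_smul, add_zero]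
      · left
        exact ⟨a, hapos, by rw [hxd, ← hb0, zero_smul, add_zero]⟩
    · have ha0 : a = 0 := by
        by_contra hne
        exact hnotboth ⟨lt_of_le_of_ne ha (Ne.symm hne), hbpos⟩
      right
      exact ⟨b, hbpos, by rw [hxd, ha0, zero_smul, zero_add]⟩
  -- the matrix M
  set M : Matrix (Fin 2) (Fin 2) ℝ := g.map (Int.cast : ℤ → ℝ) with hMdef
  have hMdet : M.det = ((g.det : ℤ) : ℝ) := (RingHom.map_det (Int.castRingHom ℝ) g).symm
  have hdet1 : M.det = 1 ∨ M.det = -1 := by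
    rcases hg with h | h
    · left; rw [hMdet, h]; norm_num
    · right; rw [hMdet, h]; norm_num
  have hdetu : IsUnit M.det := by
    rcases hdet1 with h | h <;> rw [h] <;> [exact isUnit_one; exact IsUnit.neg isUnit_one]
  have hMinvM : M⁻¹ * M = 1 := Matrix.nonsing_inv_mul M hdetu
  have hMCsub : ∀ x ∈ C, M.mulVec x ∈ C := by
    intro x hx
    rw [← hpres]
    exact ⟨x, hx, rfl⟩
  have hMinvC : ∀ x ∈ C, M⁻¹.mulVec x ∈ C := by
    intro x hx
    rw [← hpres] at hx
    obtain ⟨y, hy, rfl⟩ := hx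
    rw [Matrix.mulVec_mulVec, hMinvM, Matrix.one_mulVec]
    exact hy
  have hMinj : ∀ x : Fin 2 → ℝ, M.mulVec x = 0 → x = 0 := by
    intro x hx
    have h1 : M⁻¹.mulVec (M.mulVec x) = x := by
      rw [Matrix.mulVec_mulVec, hMinvM, Matrix.one_mulVec]
    rw [hx, Matrix.mulVec_zero] at h1
    exact h1.symm
  have hMfr : ∀ x, x ∈ frontier C → M.mulVec x ∈ frontier C := by
    intro x hxfr
    rw [hfr_eq] at hxfr ⊢
    obtain ⟨hxC, hxni⟩ := hxfr
    refine ⟨hMCsub x hxC, ?_⟩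
    intro hin
    apply hxni
    have hU : IsOpen (M.mulVec ⁻¹' interior C) :=
      (aux_cont M).isOpen_preimage _ isOpen_interior
    have hUsub : M.mulVec ⁻¹' interior C ⊆ C := by
      intro y hy
      have h1 := hMinvC _ (interior_subset hy)
      rwa [Matrix.mulVec_mulVec, hMinvM, Matrix.one_mulVec] at h1
    exact interior_maximal hUsub hU hin
  have hfinal : M * M = 1 → g ^ 2 = 1 := by
    intro hMM
    have hgg : g * g = 1 := by
      ext i j
      have hc := congrFun (congrFun hMM i) j
      have hL : (M * M) i j = (((g * g) i j : ℤ) : ℝ) := by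
        simp only [Matrix.mul_apply, Fin.sum_univ_two, hMdef, Matrix.map_apply]
        push_cast
        ring
      have hR : (1 : Matrix (Fin 2) (Fin 2) ℝ) i j
          = (((1 : Matrix (Fin 2) (Fin 2) ℤ) i j : ℤ) : ℝ) := by
        fin_cases i <;> fin_cases j <;> simp
      rw [hL, hR] at hc
      exact_mod_cast hc
    rw [pow_two]
    exact hgg
  have hMw0 : M.mulVec w' ≠ 0 := fun h => hw'0 (hMinj _ h)
  have hMv0 : M.mulVec v ≠ 0 := fun h => hv0 (hMinj _ h)
  obtain h1 | h1 := hstruct (M.mulVec w') (hMfr _ hwfr) hMw0 <;>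
    obtain h2 | h2 := hstruct (M.mulVec v) (hMfr _ hvfr) hMv0
  -- Case 1: M w' = a₁ w', M v = b₂ v
  case inl.inl =>
    obtain ⟨a₁, ha₁, e1⟩ := h1
    obtain ⟨a₂, ha₂, e2⟩ := h2
    -- impossible: v parallel to w'
    exfalso
    have hz : M.mulVec (v - (a₂/a₁) • w') = 0 := by
      rw [Matrix.mulVec_sub, Matrix.mulVec_smul, e1, e2, smul_smul]
      have : a₂ / a₁ * a₁ = a₂ := by field_simp
      rw [this, sub_self]
    have := hMinj _ hz
    rw [sub_eq_zero] at this
    exact hnotpar _ this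
  case inl.inr =>
    obtain ⟨a₁, ha₁, e1⟩ := h1
    obtain ⟨b₂, hb₂, e2⟩ := h2
    -- genuine diagonal case
    have c1 : ∀ i, M i 0 * w' 0 + M i 1 * w' 1 = a₁ * w' i := by
      intro i
      have := congrFun e1 i
      simpa [Matrix.mulVec, dotProduct, Fin.sum_univ_two] using this
    have c2 : ∀ i, M i 0 * v 0 + M i 1 * v 1 = b₂ * v i := by
      intro i
      have := congrFun e2 i
      simpa [Matrix.mulVec, dotProduct, Fin.sum_univ_two] using this
    set P : Matrix (Fin 2) (Fin 2) ℝ := !![w' 0, v 0; w' 1, v 1] with hPdef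
    have hPdet : P.det = D := by
      rw [hPdef, Matrix.det_fin_two_of, hDdef]; ring
    have hMP : M * P = P * !![a₁, 0; 0, b₂] := by
      ext i j
      fin_cases i <;> fin_cases j <;>
        simp [hPdef, Matrix.mul_apply, Fin.sum_univ_two] <;>
        [linarith [c1 0]; linarith [c2 0]; linarith [c1 1]; linarith [c2 1]]
    have hdetrel : M.det * D = D * (a₁ * b₂) := by
      have hcd := congrArg Matrix.det hMP
      rw [Matrix.det_mul, Matrix.det_mul, hPdet, Matrix.det_fin_two_of] at hcd
      nlinarith [hcd]
    have hab : a₁ * b₂ = M.det := by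
      have : (M.det) * D = (a₁ * b₂) * D := by linarith
      exact (mul_right_cancel₀ hD this).symm
    have hdetpos : M.det = 1 := by
      rcases hdet1 with h | h
      · exact h
      · exfalso; rw [h] at hab; nlinarith
    have hab1 : a₁ * b₂ = 1 := by rw [hab, hdetpos]
    have htrkey : (M 0 0 + M 1 1) * D = (a₁ + b₂) * D := by
      have e10 := c1 0
      have e11 := c1 1
      have e20 := c2 0
      have e21 := c2 1
      rw [hDdef]
      linear_combination v 1 * e10 - v 0 * e11 - w' 1 * e20 + w' 0 * e21
    have htr : M 0 0 + M 1 1 = a₁ + b₂ := mul_right_cancel₀ hD htrkey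
    have htrZ : M 0 0 + M 1 1 = ((g 0 0 + g 1 1 : ℤ) : ℝ) := by
      rw [hMdef]
      simp [Matrix.map_apply]
    obtain ⟨i, hwi⟩ : ∃ i, w i ≠ 0 := Function.ne_iff.mp hw
    have hz : ∀ j, ((g.mulVec w j : ℤ) : ℝ) = a₁ * (w j : ℝ) := by
      intro j
      have hcf := congrFun e1 j
      have hlhs : M.mulVec w' j = ((g.mulVec w j : ℤ) : ℝ) := by
        simp only [hMdef, Matrix.mulVec, dotProduct, Fin.sum_univ_two,
          Matrix.map_apply, hw'def]
        push_cast
        ring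
      rw [hlhs] at hcf
      simpa [hw'def] using hcf
    set r : ℚ := ((g.mulVec w i : ℤ) : ℚ) / ((w i : ℤ) : ℚ) with hrdef
    have hwiR : ((w i : ℤ) : ℝ) ≠ 0 := by exact_mod_cast hwi
    have hr_real : (r : ℝ) = a₁ := by
      rw [hrdef]
      push_cast
      rw [div_eq_iff hwiR]
      rw [hz i]
    have hrpos : 0 < r := by
      have : (0:ℝ) < (r : ℝ) := by rw [hr_real]; exact ha₁
      exact_mod_cast this
    have heqR : (r:ℝ) ^ 2 - ((g 0 0 + g 1 1 : ℤ) : ℝ) * (r:ℝ) + 1 = 0 := by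
      rw [hr_real, ← htrZ, htr]
      nlinarith
    have heqQ : r ^ 2 - ((g 0 0 + g 1 1 : ℤ) : ℚ) * r + 1 = 0 := by
      have : ((r ^ 2 - ((g 0 0 + g 1 1 : ℤ) : ℚ) * r + 1 : ℚ) : ℝ) = 0 := by
        push_cast
        push_cast at heqR
        linarith
      exact_mod_cast this
    have hr1 : r = 1 := aux_rat_root _ r hrpos heqQ
    have ha₁1 : a₁ = 1 := by rw [← hr_real, hr1]; norm_num
    have hb₂1 : b₂ = 1 := by nlinarith
    have hM1 : M = 1 := aux_fix w' v hD M (by rw [e1, ha₁1, one_smul]) (by rw [e2, hb₂1, one_smul])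
    have hMM : M * M = 1 := by rw [hM1, one_mul]
    exact hfinal hMM
  case inr.inl =>
    obtain ⟨b₁, hb₁, e1⟩ := h1
    obtain ⟨a₂, ha₂, e2⟩ := h2
    -- antidiagonal case
    have c1 : ∀ i, M i 0 * w' 0 + M i 1 * w' 1 = b₁ * v i := by
      intro i
      have := congrFun e1 i
      simpa [Matrix.mulVec, dotProduct, Fin.sum_univ_two] using this
    have c2 : ∀ i, M i 0 * v 0 + M i 1 * v 1 = a₂ * w' i := by
      intro i
      have := congrFun e2 i
      simpa [Matrix.mulVec, dotProduct, Fin.sum_univ_two] using this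
    set P : Matrix (Fin 2) (Fin 2) ℝ := !![w' 0, v 0; w' 1, v 1] with hPdef
    have hPdet : P.det = D := by
      rw [hPdef, Matrix.det_fin_two_of, hDdef]; ring
    have hMP : M * P = P * !![0, a₂; b₁, 0] := by
      ext i j
      fin_cases i <;> fin_cases j <;>
        simp [hPdef, Matrix.mul_apply, Fin.sum_univ_two] <;>
        [linarith [c1 0]; linarith [c2 0]; linarith [c1 1]; linarith [c2 1]]
    have hdetrel : M.det * D = D * (-(a₂ * b₁)) := by
      have hcd := congrArg Matrix.det hMP
      rw [Matrix.det_mul, Matrix.det_mul, hPdet, Matrix.det_fin_two_of] at hcd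
      nlinarith [hcd]
    have hab : a₂ * b₁ = -M.det := by
      have : (M.det) * D = (-(a₂ * b₁)) * D := by linarith
      have h2 := mul_right_cancel₀ hD this
      linarith
    have hab1 : a₂ * b₁ = 1 := by
      rcases hdet1 with h | h
      · exfalso; rw [h] at hab; nlinarith
      · rw [h] at hab; linarith
    have hN1 : M.mulVec (M.mulVec w') = w' := by
      rw [e1, Matrix.mulVec_smul, e2, smul_smul]
      rw [show b₁ * a₂ = 1 by linarith [hab1, mul_comm a₂ b₁]]
      rw [one_smul]
    have hN2 : M.mulVec (M.mulVec v) = v := by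
      rw [e2, Matrix.mulVec_smul, e1, smul_smul]
      rw [show a₂ * b₁ = 1 from hab1, one_smul]
    have hMM : M * M = 1 := by
      apply aux_fix w' v hD
      · rw [← Matrix.mulVec_mulVec]; exact hN1
      · rw [← Matrix.mulVec_mulVec]; exact hN2
    exact hfinal hMM
  case inr.inr =>
    obtain ⟨b₁, hb₁, e1⟩ := h1
    obtain ⟨b₂, hb₂, e2⟩ := h2
    -- impossible: w' parallel to v
    exfalso
    have hz : M.mulVec (w' - (b₁/b₂) • v) = 0 := by
      rw [Matrix.mulVec_sub, Matrix.mulVec_smul, e1, e2, smul_smul]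
      have : b₁ / b₂ * b₂ = b₁ := by field_simp
      rw [this, sub_self]
    have hpar := hMinj _ hz
    rw [sub_eq_zero] at hpar
    -- w' = (b₁/b₂) • v, so v = (b₂/b₁) • w'
    apply hnotpar (b₂/b₁)
    rw [hpar, smul_smul]
    have : b₂ / b₁ * (b₁ / b₂) = 1 := by field_simp
    rw [this, one_smul]
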